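/- In a 3-hive f on Δ_m whose NW boundary edge has differences ω_j (read SW to NE), the strip one step in from the NW edge has differences ω_j or ω_{j−1}; moreover the first case occurs if and only if ν_1 = λ_1 and the second if and only if ν_1 = λ_1 + 1, where λ and ν are the dominant weights along the other two sides. -/

import Mathlib

/-- The rhombus inequalities for an integer labeling of the lattice points of the triangle
Δ_m = {(i,j,k) : i,j,k ≥ 0, i+j+k = m}: for every unit rhombus, the sum across the short
diagonal is at least the sum across the long diagonal.  (Values of `f` off the simplex
are irrelevant.) -/
def RhombusIneqs (m : ℕ) (f : ℕ → ℕ → ℕ → ℤ) : Prop :=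
  (∀ a j c, a + j + c + 2 = m →
      f (a+2) j c + f a (j+1) (c+1) ≤ f (a+1) j (c+1) + f (a+1) (j+1) c) ∧
  (∀ i b c, i + b + c + 2 = m →
      f (i+1) (b+1) c + f i b (c+2) ≤ f i (b+1) (c+1) + f (i+1) b (c+1)) ∧
  (∀ i b c, i + b + c + 2 = m →
      f i (b+2) c + f (i+1) b (c+1) ≤ f i (b+1) (c+1) + f (i+1) (b+1) c)

/-- Telescoping: if `g` increases by exactly `c` at each step between `a` and `b`,
then `g b = g a + (b - a) * c`. -/
lemma tele_between (g : ℕ → ℤ) (c : ℤ) (a b : ℕ) (hab : a ≤ b)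
    (h : ∀ t, a ≤ t → t < b → g (t+1) = g t + c) :
    g b = g a + ((b : ℤ) - (a : ℤ)) * c := by
  induction b, hab using Nat.le_induction with
  | base => simp
  | succ b hb ih =>
    rw [h b hb (Nat.lt_succ_self b), ih (fun t ht htb => h t ht (htb.trans (Nat.lt_succ_self b)))]
    push_cast
    ring

/-- Lemma of Knutson–Tao–Woodward: in a 3-hive whose NW boundary edge has differences
ω_j (so its values increase by 1 for the first j steps and are constant thereafter), with
λ and ν the dominant weights along the other two sides, the strip one step in from the
NW edge has differences ω_j or ω_{j−1}; the first case occurs iff ν₁ = λ₁ and the second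
iff ν₁ = λ₁ + 1. -/
theorem ktw_strip_lemma (m j : ℕ) (hm : 1 ≤ m) (hj : j ≤ m)
    (lam nu : ℕ → ℤ) (f : ℕ → ℕ → ℕ → ℤ) (hf : RhombusIneqs m f)
    (homega : ∀ t, t < m → f (m - (t+1)) (t+1) 0 - f (m - t) t 0
        = if t < j then 1 else 0)
    (hlam : ∀ t, t < m → f 0 (m - (t+1)) (t+1) - f 0 (m - t) t = lam t)
    (hnu : ∀ t, t < m → f (m - (t+1)) 0 (t+1) - f (m - t) 0 t = nu t)
    (hlamdec : ∀ t, t + 1 < m → lam (t+1) ≤ lam t)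
    (hnudec : ∀ t, t + 1 < m → nu (t+1) ≤ nu t) :
    (nu 0 = lam 0 ∨ nu 0 = lam 0 + 1) ∧
    (nu 0 = lam 0 →
      ∀ t, t + 1 < m →
        f (m - 1 - (t+1)) (t+1) 1 - f (m - 1 - t) t 1 = if t < j then 1 else 0) ∧
    (nu 0 = lam 0 + 1 →
      ∀ t, t + 1 < m →
        f (m - 1 - (t+1)) (t+1) 1 - f (m - 1 - t) t 1 = if t + 1 < j then 1 else 0) := by
  obtain ⟨h1, h2, h3⟩ := hf
  -- total increase along the NW edge is j
  have hEm : f 0 m 0 = f m 0 0 + (j : ℤ) := by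
    have e1 := tele_between (fun t => f (m - t) t 0) 1 0 j (by omega)
      (fun t ht htj => by
        have hw := homega t (by omega)
        rw [if_pos htj] at hw
        beta_reduce
        linarith)
    have e2 := tele_between (fun t => f (m - t) t 0) 0 j m hj
      (fun t ht htm => by
        have hw := homega t htm
        rw [if_neg (by omega : ¬ t < j)] at hw
        beta_reduce
        linarith)
    simp only [Nat.sub_zero, Nat.sub_self, Nat.cast_zero, sub_zero, mul_one, mul_zero,
      add_zero] at e1 e2
    linarith
  -- upper bound for strip differences
  have hGle : ∀ t, t + 1 < m →
      f (m - 1 - (t+1)) (t+1) 1 - f (m - 1 - t) t 1 ≤ (if t < j then (1:ℤ) else 0) := by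
    intro t ht
    have e := h1 (m - 2 - t) t 0 (by omega)
    simp only [zero_add] at e
    rw [show m - 2 - t + 2 = m - t by omega, show m - 2 - t + 1 = m - 1 - t by omega,
        show m - 2 - t = m - 1 - (t+1) by omega] at e
    have hw := homega t (by omega)
    rw [show m - (t+1) = m - 1 - t by omega] at hw
    split_ifs at hw ⊢ <;> linarith
  -- lower bound for strip differences
  have hGge : ∀ t, t + 1 < m →
      (if t + 1 < j then (1:ℤ) else 0) ≤ f (m - 1 - (t+1)) (t+1) 1 - f (m - 1 - t) t 1 := by
    intro t ht
    have e := h3 (m - 2 - t) t 0 (by omega)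
    simp only [zero_add] at e
    rw [show m - 2 - t + 1 = m - 1 - t by omega] at e
    have hw := homega (t+1) (by omega)
    rw [show t + 1 + 1 = t + 2 by omega, show m - (t+2) = m - 2 - t by omega,
        show m - (t+1) = m - 1 - t by omega] at hw
    rw [show m - 1 - (t+1) = m - 2 - t by omega]
    split_ifs at hw ⊢ <;> linarith
  have hG1 : ∀ t, t + 1 < m → t + 1 < j →
      f (m - 1 - (t+1)) (t+1) 1 = f (m - 1 - t) t 1 + 1 := by
    intro t ht htj
    have a := hGle t ht
    have b := hGge t ht
    rw [if_pos htj] at b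
    rw [if_pos (by omega : t < j)] at a
    linarith
  have hG0 : ∀ t, t + 1 < m → j ≤ t →
      f (m - 1 - (t+1)) (t+1) 1 = f (m - 1 - t) t 1 + 0 := by
    intro t ht htj
    have a := hGle t ht
    have b := hGge t ht
    rw [if_neg (by omega : ¬ t < j)] at a
    rw [if_neg (by omega : ¬ t + 1 < j)] at b
    linarith
  have hnu0 : f (m - 1) 0 1 - f m 0 0 = nu 0 := by simpa using hnu 0 (by omega)
  have hlam0 : f 0 (m - 1) 1 - f 0 m 0 = lam 0 := by simpa using hlam 0 (by omega)
  rcases Nat.lt_or_ge j 1 with hj0 | hj1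
  · -- case j = 0
    have hj' : j = 0 := by omega
    subst hj'
    have hT := tele_between (fun t => f (m - 1 - t) t 1) 0 0 (m - 1) (by omega)
      (fun t ht htm => hG0 t (by omega) (by omega))
    simp only [Nat.sub_zero, Nat.sub_self, mul_zero, add_zero] at hT
    have hEm' : f 0 m 0 = f m 0 0 := by push_cast at hEm; linarith
    refine ⟨Or.inl (by linarith), ?_, ?_⟩
    · intro _ t ht
      rw [if_neg (by omega : ¬ t < 0)]
      have := hG0 t ht (by omega)
      linarith
    · intro _ t ht
      rw [if_neg (by omega : ¬ t + 1 < 0)]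
      have := hG0 t ht (by omega)
      linarith
  · rcases Nat.lt_or_ge j m with hjm | hjm'
    · -- case 1 ≤ j < m
      obtain ⟨k, rfl⟩ : ∃ k, j = k + 1 := ⟨j - 1, by omega⟩
      have hSk := tele_between (fun t => f (m - 1 - t) t 1) 1 0 k (by omega)
        (fun t ht htk => hG1 t (by omega) (by omega))
      have hSm := tele_between (fun t => f (m - 1 - t) t 1) 0 (k+1) (m - 1) (by omega)
        (fun t ht htm => hG0 t (by omega) (by omega))
      simp only [Nat.sub_zero, Nat.sub_self, Nat.cast_zero, sub_zero, mul_one, mul_zero,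
        add_zero] at hSk hSm
      have ha := hGle k (by omega)
      have hb := hGge k (by omega)
      rw [if_pos (by omega : k < k + 1)] at ha
      rw [if_neg (by omega : ¬ k + 1 < k + 1)] at hb
      have hEm' : f 0 m 0 = f m 0 0 + ((k : ℤ) + 1) := by push_cast at hEm; linarith
      have key : nu 0 - lam 0 = 1 - (f (m - 1 - (k+1)) (k+1) 1 - f (m - 1 - k) k 1) := by
        linarith
      have hdisj : nu 0 = lam 0 ∨ nu 0 = lam 0 + 1 := by
        have hx : (0:ℤ) ≤ nu 0 - lam 0 := by linarith
        have hy : nu 0 - lam 0 ≤ 1 := by linarith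
        omega
      refine ⟨hdisj, ?_, ?_⟩
      · intro hcase t ht
        have hGk1 : f (m - 1 - (k+1)) (k+1) 1 - f (m - 1 - k) k 1 = 1 := by linarith
        rcases Nat.lt_trichotomy t k with h | h | h
        · rw [if_pos (by omega : t < k + 1)]
          have := hG1 t ht (by omega)
          linarith
        · subst h
          rw [if_pos (by omega : t < t + 1)]
          linarith
        · rw [if_neg (by omega : ¬ t < k + 1)]
          have := hG0 t ht (by omega)
          linarith
      · intro hcase t ht
        have hGk0 : f (m - 1 - (k+1)) (k+1) 1 - f (m - 1 - k) k 1 = 0 := by linarith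
        rcases Nat.lt_trichotomy t k with h | h | h
        · rw [if_pos (by omega : t + 1 < k + 1)]
          have := hG1 t ht (by omega)
          linarith
        · subst h
          rw [if_neg (by omega : ¬ t + 1 < t + 1)]
          linarith
        · rw [if_neg (by omega : ¬ t + 1 < k + 1)]
          have := hG0 t ht (by omega)
          linarith
    · -- case j = m
      have hjm : j = m := by omega
      have hSm := tele_between (fun t => f (m - 1 - t) t 1) 1 0 (m - 1) (by omega)
        (fun t ht htm => hG1 t (by omega) (by omega))
      simp only [Nat.sub_zero, Nat.sub_self, Nat.cast_zero, sub_zero, mul_one] at hSm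
      have hc : ((m - 1 : ℕ) : ℤ) = (m : ℤ) - 1 := by omega
      rw [hc] at hSm
      have hjc : (j : ℤ) = (m : ℤ) := by omega
      have key : nu 0 = lam 0 + 1 := by rw [hjc] at hEm; linarith
      refine ⟨Or.inr key, ?_, ?_⟩
      · intro hcase t ht
        rw [if_pos (by omega : t < j)]
        have := hG1 t ht (by omega)
        linarith
      · intro hcase t ht
        rw [if_pos (by omega : t + 1 < j)]
        have := hG1 t ht (by omega)
        linarith
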